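/- Let m be a nonzero ideal of the ring of integers O of a number field K, let 𝔞 be a nonzero ideal of O, set 𝔟 = 𝔞 + m and N = N(m), and let q : O → O/(N²) be the quotient map modulo the principal ideal generated by N². Then among the residue classes in the image q(𝔟), the proportion of classes having a representative c ∈ 𝔟 with c ∉ 𝔟·p is exactly 1 - 1/N(p) for each prime ideal p dividing m; precisely, Nat.card {x : x = q(c) for some c ∈ 𝔟 with c ∉ 𝔟·p} · N(p) = Nat.card (q(𝔟)) · (N(p) - 1). -/

import Mathlib

open NumberField

set_option synthInstance.maxHeartbeats 1000000

theorem stmt_14 (K : Type*) [Field K] [NumberField K]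
    (m 𝔞 : Ideal (RingOfIntegers K)) (hm : m ≠ ⊥) (h𝔞 : 𝔞 ≠ ⊥)
    (p : Ideal (RingOfIntegers K)) (hp : p.IsPrime) (hpm : p ∣ m) :
    Nat.card {x : RingOfIntegers K ⧸
          Ideal.span {((Ideal.absNorm m : RingOfIntegers K)) ^ 2} |
        ∃ c ∈ 𝔞 ⊔ m, c ∉ (𝔞 ⊔ m) * p ∧
          Ideal.Quotient.mk (Ideal.span {((Ideal.absNorm m : RingOfIntegers K)) ^ 2}) c = x} *
        Ideal.absNorm p =
      Nat.card
          ((Ideal.Quotient.mk (Ideal.span {((Ideal.absNorm m : RingOfIntegers K)) ^ 2})) ''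
            ((𝔞 ⊔ m : Ideal (RingOfIntegers K)) : Set (RingOfIntegers K))) *
        (Ideal.absNorm p - 1) := by
  set O := RingOfIntegers K
  set J : Ideal O := Ideal.span {((Ideal.absNorm m : O)) ^ 2} with hJdef
  set 𝔟 : Ideal O := 𝔞 ⊔ m with h𝔟def
  -- basic nonvanishing
  have hNm : Ideal.absNorm m ≠ 0 := by
    simp [Ideal.absNorm_eq_zero_iff, hm]
  have hJne : J ≠ ⊥ := by
    rw [hJdef, Ne, Ideal.span_singleton_eq_bot]
    exact pow_ne_zero _ (by exact_mod_cast Nat.cast_ne_zero.mpr hNm)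
  have hfin : Finite (O ⧸ J) := by
    rw [← Ideal.absNorm_ne_zero_iff]
    simpa [Ideal.absNorm_eq_zero_iff] using hJne
  -- inclusions
  have hmle : m ≤ p := Ideal.le_of_dvd hpm
  have hJle : J ≤ 𝔟 * p := by
    rw [hJdef, Ideal.span_le, Set.singleton_subset_iff, sq]
    exact Ideal.mul_mem_mul (Ideal.mem_sup_right (Ideal.absNorm_mem m))
      (hmle (Ideal.absNorm_mem m))
  have hmul_le : 𝔟 * p ≤ 𝔟 := Ideal.mul_le_left
  have hJle𝔟 : J ≤ 𝔟 := hJle.trans hmul_le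
  -- identify the image with the mapped submodule
  have himg : (Ideal.Quotient.mk J) '' (𝔟 : Set O) = ↑(Submodule.map J.mkQ 𝔟) := by
    rw [Submodule.map_coe]; rfl
  -- set description of the LHS set
  have hset : {x : O ⧸ J | ∃ c ∈ 𝔟, c ∉ 𝔟 * p ∧ Ideal.Quotient.mk J c = x}
      = (↑(Submodule.map J.mkQ 𝔟) : Set (O ⧸ J)) \ ↑(Submodule.map J.mkQ (𝔟 * p)) := by
    ext x
    simp only [Set.mem_setOf_eq, Set.mem_diff, SetLike.mem_coe, Submodule.mem_map]
    constructor
    · rintro ⟨c, hc, hcp, rfl⟩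
      refine ⟨⟨c, hc, rfl⟩, ?_⟩
      rintro ⟨c', hc', hc'x⟩
      apply hcp
      have hJmem : c - c' ∈ J := by
        have : Ideal.Quotient.mk J c' = Ideal.Quotient.mk J c := hc'x
        rw [← Ideal.Quotient.eq]
        exact this.symm
      have h2 : c - c' ∈ 𝔟 * p := hJle hJmem
      simpa using add_mem h2 hc'
    · rintro ⟨⟨c, hc, rfl⟩, hnot⟩
      exact ⟨c, hc, fun hcp => hnot ⟨c, hcp, rfl⟩, rfl⟩
  -- counting
  have hsub : (↑(Submodule.map J.mkQ (𝔟 * p)) : Set (O ⧸ J)) ⊆ ↑(Submodule.map J.mkQ 𝔟) :=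
    Submodule.map_mono hmul_le
  have hcard1 : Nat.card (Submodule.map J.mkQ 𝔟) * Ideal.absNorm 𝔟 = Ideal.absNorm J := by
    have := Submodule.card_quotient_mul_card_quotient 𝔟 J hJle𝔟
    rwa [Ideal.absNorm_apply, Ideal.absNorm_apply, Submodule.cardQuot_apply,
      Submodule.cardQuot_apply]
  have hcard2 : Nat.card (Submodule.map J.mkQ (𝔟 * p)) * (Ideal.absNorm 𝔟 * Ideal.absNorm p)
      = Ideal.absNorm J := by
    have h := Submodule.card_quotient_mul_card_quotient (𝔟 * p) J hJle
    rw [← map_mul Ideal.absNorm]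
    rwa [Ideal.absNorm_apply, Ideal.absNorm_apply, Submodule.cardQuot_apply,
      Submodule.cardQuot_apply]
  have h𝔟ne : Ideal.absNorm 𝔟 ≠ 0 := by
    rw [Ne, Ideal.absNorm_eq_zero_iff]
    intro h
    exact h𝔞 (le_bot_iff.mp (h ▸ le_sup_left))
  set a := Nat.card (Submodule.map J.mkQ 𝔟) with ha
  set b := Nat.card (Submodule.map J.mkQ (𝔟 * p)) with hb
  have hab : a = b * Ideal.absNorm p := by
    apply Nat.eq_of_mul_eq_mul_right (Nat.pos_of_ne_zero h𝔟ne)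
    rw [hcard1, mul_comm b, mul_assoc, mul_comm (Ideal.absNorm p), ← hcard2]
    ring
  -- cardinalities of the sets
  have hA : Nat.card ((Ideal.Quotient.mk J) '' (𝔟 : Set O)) = a := by
    rw [himg]; rfl
  have hS : Nat.card {x : O ⧸ J | ∃ c ∈ 𝔟, c ∉ 𝔟 * p ∧ Ideal.Quotient.mk J c = x} = a - b := by
    rw [hset, Nat.card_coe_set_eq, Set.ncard_diff hsub (Set.toFinite _)]
    congr 1 <;> rw [← Nat.card_coe_set_eq] <;> rfl
  rw [hS, hA, hab, Nat.sub_mul, Nat.mul_sub, mul_one]
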